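/- Let n ≥ 1. Define the matrix A_n, indexed by functions Fin n → Fin d × (Fin d × Fin d), entrywise by A_n[x, y] = ∏_{t : Fin n} A[x t, y t] (the n-fold tensor power of A). Let α, β : (Fin n → Fin d) → ((Fin n → Fin d) → ℂ) be arbitrary families of vectors, and let x be the vector indexed by Fin n → Fin d × (Fin d × Fin d) defined by x s = α_{s₁}(s₂) · β_{s₁}(s₃), where s₁, s₂, s₃ : Fin n → Fin d denote the three component functions of s. Then ⟨x, A_n x⟩ = Σ_{s,s'} conj(x s) · A_n[s, s'] · x s' equals 0 if and only if for every i : Fin n → Fin d, α_i = 0 or β_i = 0. (This is the matrix-theoretic core of Theorem 1: two pure inputs to n copies of the channel N_d have exactly orthogonal outputs iff for every computational-basis string at most one of the corresponding component vectors is nonzero.) -/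

import Mathlib

open Matrix Kronecker

/-- Projector onto the maximally entangled state: Φ[(i,j),(k,l)] = 1/d if i=j and k=l. -/
noncomputable def Phi (d : ℕ) : Matrix (Fin d × Fin d) (Fin d × Fin d) ℂ :=
  fun p q => if p.1 = p.2 ∧ q.1 = q.2 then ((d : ℂ))⁻¹ else 0

/-- Coefficients a i k: 1 on the diagonal, -1/(d²-1) off the diagonal. -/
noncomputable def aCoef (d : ℕ) (i k : Fin d) : ℝ :=
  if i = k then 1 else -1 / ((d : ℝ) ^ 2 - 1)

/-- The matrix A = Σ_{i,k} E_{ik} ⊗ₖ (a i k • (I − Φ) + Φ). -/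
noncomputable def Amat (d : ℕ) : Matrix (Fin d × (Fin d × Fin d)) (Fin d × (Fin d × Fin d)) ℂ :=
  ∑ i : Fin d, ∑ k : Fin d,
    (Matrix.single i k (1 : ℂ)) ⊗ₖ
      (aCoef d i k • ((1 : Matrix (Fin d × Fin d) (Fin d × Fin d) ℂ) - Phi d) + Phi d)

/-- The n-fold tensor (Kronecker) power of A, indexed by functions Fin n → Fin d × (Fin d × Fin d). -/
noncomputable def AmatPow (d n : ℕ) :
    Matrix (Fin n → Fin d × (Fin d × Fin d)) (Fin n → Fin d × (Fin d × Fin d)) ℂ :=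
  fun x y => ∏ t : Fin n, Amat d (x t) (y t)

namespace Stmt0

variable (d : ℕ)

noncomputable def dg (pq : Fin d × Fin d) : ℂ := if pq.1 = pq.2 then 1 else 0

noncomputable def wv (p' pq : Fin d × Fin d) : ℂ :=
  (if p' = pq then 1 else 0) - (if p'.1 = p'.2 then dg d pq * (d : ℂ)⁻¹ else 0)

noncomputable def uv (r i : Fin d) : ℂ := (if r = i then 1 else 0) - (d : ℂ)⁻¹

abbrev V (d : ℕ) := Fin d × (Fin d × Fin d)

abbrev K (d : ℕ) := (Fin d × (Fin d × Fin d)) ⊕ ((Fin d × Fin d) ⊕ Unit)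

noncomputable def psi : K d → V d → ℂ
  | Sum.inl rp => fun v => uv d rp.1 v.1 * wv d rp.2 v.2
  | Sum.inr (Sum.inl p') => fun v => wv d p' v.2
  | Sum.inr (Sum.inr _) => fun v => dg d v.2

noncomputable def wt : K d → ℝ
  | Sum.inl _ => d^2 / (d^2 - 1)
  | Sum.inr (Sum.inl _) => 1 / (d + 1)
  | Sum.inr (Sum.inr _) => 1 / d

variable {d}

lemma wt_pos (hd : 2 ≤ d) (k : K d) : 0 < wt d k := by
  have h1 : (1:ℝ) < (d:ℝ) := by exact_mod_cast Nat.lt_of_lt_of_le one_lt_two hd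
  have h2 : (0:ℝ) < (d:ℝ)^2 - 1 := by nlinarith
  rcases k with _ | (_ | _) <;> simp only [wt] <;> positivity



lemma phi_eq (x y : Fin d × Fin d) : Phi d x y = dg d x * dg d y * (d : ℂ)⁻¹ := by
  unfold Phi dg
  by_cases h1 : x.1 = x.2 <;> by_cases h2 : y.1 = y.2 <;> simp [h1, h2]

lemma amat_apply (i k : Fin d) (x y : Fin d × Fin d) :
    Amat d (i, x) (k, y) =
      (aCoef d i k : ℂ) * ((if x = y then 1 else 0) - Phi d x y) + Phi d x y := by
  unfold Amat
  simp only [Matrix.sum_apply, Matrix.kroneckerMap_apply, Matrix.single,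
    Matrix.of_apply, Matrix.add_apply, Matrix.smul_apply, Matrix.sub_apply, Matrix.one_apply,
    ite_mul, one_mul, zero_mul, smul_eq_mul]
  rw [Finset.sum_comm]
  rw [Finset.sum_eq_single k]
  · rw [Finset.sum_eq_single i]
    · simp [Complex.real_smul]
    · intro b _ hb
      rw [if_neg]
      intro h
      first
      | exact hb h.1
      | exact hb h.1.symm
      | exact hb h.2
      | exact hb h.2.symm
    · simp
  · intro b _ hb
    apply Finset.sum_eq_zero
    intro a _
    rw [if_neg]
    intro h
    first
    | exact hb h.1
    | exact hb h.1.symm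
    | exact hb h.2
    | exact hb h.2.symm
  · simp

lemma dcast_ne (hd : 2 ≤ d) : (d : ℂ) ≠ 0 := Nat.cast_ne_zero.mpr (by omega)

lemma sum_uv (hd : 2 ≤ d) (i k : Fin d) :
    ∑ r : Fin d, uv d r i * uv d r k = (if i = k then 1 else 0) - (d : ℂ)⁻¹ := by
  have hd0 : (d : ℂ) ≠ 0 := dcast_ne hd
  have key : ∀ r : Fin d, uv d r i * uv d r k =
      (if r = i then (if i = k then (1:ℂ) else 0) else 0)
      - (if r = i then (d:ℂ)⁻¹ else 0) - (if r = k then (d:ℂ)⁻¹ else 0)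
      + (d:ℂ)⁻¹ * (d:ℂ)⁻¹ := by
    intro r; unfold uv
    by_cases h1 : r = i <;> by_cases h2 : r = k
    · have h3 : i = k := h1.symm.trans h2
      simp [h1, h2, h3]; try ring
    · have h3 : ¬ (i = k) := fun h => h2 (h1.trans h)
      simp [h1, h2, h3, Ne.symm h3]; try ring
    · have h3 : ¬ (i = k) := fun h => h1 (h2.trans h.symm)
      simp [h1, h2, h3, Ne.symm h3]; try ring
    · simp [h1, h2]; try ring
  rw [Finset.sum_congr rfl (fun r _ => key r)]
  rw [Finset.sum_add_distrib, Finset.sum_sub_distrib, Finset.sum_sub_distrib]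
  rw [Finset.sum_ite_eq' Finset.univ i, Finset.sum_ite_eq' Finset.univ i,
    Finset.sum_ite_eq' Finset.univ k]
  simp only [Finset.mem_univ, if_true, Finset.sum_const, Finset.card_univ, Fintype.card_fin,
    nsmul_eq_mul]
  have hc : (d : ℂ) * ((d:ℂ)⁻¹ * (d:ℂ)⁻¹) = (d:ℂ)⁻¹ := by field_simp
  rw [hc]; ring

lemma sum_dgsq : ∑ p' : Fin d × Fin d, (if p'.1 = p'.2 then (1:ℂ) else 0) = (d : ℂ) := by
  rw [Fintype.sum_prod_type]
  simp [Finset.sum_ite_eq' Finset.univ]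

lemma dg_sq (x : Fin d × Fin d) : dg d x * dg d x = dg d x := by
  unfold dg; by_cases h : x.1 = x.2 <;> simp [h]

lemma sum_wv (hd : 2 ≤ d) (x y : Fin d × Fin d) :
    ∑ p' : Fin d × Fin d, wv d p' x * wv d p' y
      = (if x = y then 1 else 0) - dg d x * dg d y * (d : ℂ)⁻¹ := by
  have hd0 : (d : ℂ) ≠ 0 := dcast_ne hd
  have key : ∀ p' : Fin d × Fin d, wv d p' x * wv d p' y =
      (if p' = x then (if x = y then (1:ℂ) else 0) else 0)
      - (if p' = x then dg d x * (dg d y * (d:ℂ)⁻¹) else 0)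
      - (if p' = y then dg d y * (dg d x * (d:ℂ)⁻¹) else 0)
      + (if p'.1 = p'.2 then (1:ℂ) else 0) * (dg d x * dg d y * ((d:ℂ)⁻¹ * (d:ℂ)⁻¹)) := by
    intro p'; unfold wv
    by_cases h1 : p' = x <;> by_cases h2 : p' = y
    · have h3 : x = y := h1.symm.trans h2
      simp [dg, h1, h2, h3] <;> try ring
      try (split_ifs <;> ring)
    · have h3 : ¬ (x = y) := fun h => h2 (h1.trans h)
      simp [dg, h1, h2, h3, Ne.symm h3] <;> try ring
      try (split_ifs <;> ring)
    · have h3 : ¬ (x = y) := fun h => h1 (h2.trans h.symm)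
      simp [dg, h1, h2, h3, Ne.symm h3] <;> try ring
      try (split_ifs <;> ring)
    · simp [dg, h1, h2] <;> try ring
      try (split_ifs <;> ring)
  rw [Finset.sum_congr rfl (fun p' _ => key p')]
  rw [Finset.sum_add_distrib, Finset.sum_sub_distrib, Finset.sum_sub_distrib]
  rw [Finset.sum_ite_eq' Finset.univ x, Finset.sum_ite_eq' Finset.univ x,
    Finset.sum_ite_eq' Finset.univ y, ← Finset.sum_mul, sum_dgsq]
  simp only [Finset.mem_univ, if_true]
  have hc : (d:ℂ) * (dg d x * dg d y * ((d:ℂ)⁻¹ * (d:ℂ)⁻¹)) = dg d x * dg d y * (d:ℂ)⁻¹ := by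
    field_simp
  rw [hc]
  have e2 : dg d x * (dg d y * (d:ℂ)⁻¹) + dg d y * (dg d x * (d:ℂ)⁻¹)
      = dg d x * dg d y * (d:ℂ)⁻¹ + dg d x * dg d y * (d:ℂ)⁻¹ := by ring
  ring

lemma key1 (hd : 2 ≤ d) (u v : V d) :
    Amat d u v = ∑ k : K d, (wt d k : ℂ) * psi d k u * psi d k v := by
  obtain ⟨i, x⟩ := u
  obtain ⟨k, y⟩ := v
  have hd0 : (d : ℂ) ≠ 0 := dcast_ne hd
  have hd1 : ((d:ℂ)^2 - 1) ≠ 0 := by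
    have e : ((d:ℂ)^2 - 1) = (((d:ℝ)^2 - 1 : ℝ) : ℂ) := by push_cast; ring
    rw [e, Complex.ofReal_ne_zero]
    have : (2:ℝ) ≤ (d:ℝ) := by exact_mod_cast hd
    nlinarith
  have hd2 : ((d:ℂ) + 1) ≠ 0 := by
    have e : ((d:ℂ) + 1) = (((d:ℝ) + 1 : ℝ) : ℂ) := by push_cast; ring
    rw [e, Complex.ofReal_ne_zero]
    have : (0:ℝ) ≤ (d:ℝ) := Nat.cast_nonneg d
    nlinarith
  rw [amat_apply, phi_eq]
  have hsum : ∑ kk : K d, (wt d kk : ℂ) * psi d kk (i,x) * psi d kk (k,y)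
      = (((d:ℝ)^2 / ((d:ℝ)^2 - 1) : ℝ) : ℂ) *
          ((((if i = k then 1 else 0) - (d:ℂ)⁻¹)) * ((if x = y then 1 else 0) - dg d x * dg d y * (d:ℂ)⁻¹))
        + (((1 / ((d:ℝ) + 1) : ℝ) : ℂ) * ((if x = y then 1 else 0) - dg d x * dg d y * (d:ℂ)⁻¹)
        + ((1 / (d:ℝ) : ℝ) : ℂ) * (dg d x * dg d y)) := by
    rw [Fintype.sum_sum_type, Fintype.sum_sum_type]
    simp only [psi, wt]
    congr 1
    · rw [Fintype.sum_prod_type]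
      rw [← sum_uv hd i k, ← sum_wv hd x y, Finset.sum_mul_sum, Finset.mul_sum]
      apply Finset.sum_congr rfl
      intro r _
      rw [Finset.mul_sum]
      apply Finset.sum_congr rfl
      intro p' _
      ring
    · congr 1
      · rw [← sum_wv hd x y, Finset.mul_sum]
        apply Finset.sum_congr rfl
        intro p' _
        ring
      · simp [mul_assoc]
  rw [hsum]
  unfold aCoef
  have hP : ((d:ℝ)^2 - 1 : ℝ) ≠ 0 := by
    have : (2:ℝ) ≤ (d:ℝ) := by exact_mod_cast hd
    nlinarith
  have hQ : ((d:ℝ) + 1 : ℝ) ≠ 0 := by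
    have : (0:ℝ) ≤ (d:ℝ) := Nat.cast_nonneg d
    nlinarith
  have hR : ((d:ℝ) : ℝ) ≠ 0 := by
    have : (2:ℝ) ≤ (d:ℝ) := by exact_mod_cast hd
    nlinarith
  have e3 : ((1 / (d:ℝ) : ℝ) : ℂ) = (d:ℂ)⁻¹ := by push_cast; rw [one_div]
  by_cases hik : i = k
  · simp only [hik, eq_self_iff_true, if_true, Complex.ofReal_one]
    have e1 : (((d:ℝ)^2 / ((d:ℝ)^2 - 1) : ℝ) : ℂ) * ((1:ℂ) - (d:ℂ)⁻¹)
        + ((1 / ((d:ℝ) + 1) : ℝ) : ℂ) = 1 := by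
      push_cast
      field_simp
      ring
    linear_combination (-(((if x = y then (1:ℂ) else 0) - dg d x * dg d y * (d:ℂ)⁻¹))) * e1
      - (dg d x * dg d y) * e3
  · simp only [if_neg hik]
    have e2 : (((d:ℝ)^2 / ((d:ℝ)^2 - 1) : ℝ) : ℂ) * ((0:ℂ) - (d:ℂ)⁻¹)
        + ((1 / ((d:ℝ) + 1) : ℝ) : ℂ) = ((-1 / ((d:ℝ)^2 - 1) : ℝ) : ℂ) := by
      push_cast
      field_simp
      ring
    linear_combination (-(((if x = y then (1:ℂ) else 0) - dg d x * dg d y * (d:ℂ)⁻¹))) * e2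
      - (dg d x * dg d y) * e3

/-! ## Conditions and the combinatorial core -/

variable (d) in
noncomputable def theta : Option (Fin d × (Fin d × Fin d)) → V d → ℂ
  | none => fun v => dg d v.2
  | some rp => fun v => (if rp.1 = v.1 then 1 else 0) * wv d rp.2 v.2

noncomputable def CondSum (d : ℕ) {ι : Type} [Fintype ι] [DecidableEq ι]
    (α β : (ι → Fin d) → ((ι → Fin d) → ℂ))
    (c : ι → Option (Fin d × (Fin d × Fin d))) : ℂ :=
  ∑ s : ι → V d, (∏ t, theta d (c t) (s t)) *
    (α (fun t => (s t).1) (fun t => (s t).2.1) * β (fun t => (s t).1) (fun t => (s t).2.2))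

section Crux

variable {ι : Type} [Fintype ι] [DecidableEq ι]

def ins (t : ι) {X : Type} (f : {u : ι // u ≠ t} → X) (v : X) : ι → X :=
  fun u => if h : u = t then v else f ⟨u, h⟩

lemma ins_self (t : ι) {X : Type} (f : {u : ι // u ≠ t} → X) (v : X) : ins t f v t = v :=
  dif_pos rfl

lemma ins_ne (t : ι) {X : Type} (f : {u : ι // u ≠ t} → X) (v : X) (u : {u : ι // u ≠ t}) :
    ins t f v u.val = f u := by
  unfold ins
  rw [dif_neg u.prop]

lemma ins_restrict (t : ι) {X : Type} (s : ι → X) : ins t (fun u => s u.val) (s t) = s := by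
  funext u
  unfold ins
  by_cases h : u = t
  · subst h; exact dif_pos rfl
  · simp [h]

def splitEq (t : ι) (X : Type) : (ι → X) ≃ X × ({u : ι // u ≠ t} → X) where
  toFun s := (s t, fun u => s u.val)
  invFun p := ins t p.2 p.1
  left_inv s := ins_restrict t s
  right_inv p := by
    refine Prod.ext (ins_self t p.2 p.1) ?_
    funext u
    exact ins_ne t p.2 p.1 u

lemma prod_split (t : ι) (g : ι → ℂ) :
    ∏ u, g u = g t * ∏ u : {u : ι // u ≠ t}, g u.val := by
  rw [Finset.prod_eq_mul_prod_sdiff_singleton_of_mem (Finset.mem_univ t)]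
  congr 1
  exact (Finset.prod_subtype (Finset.univ \ {t}) (by simp) g)

lemma ins_comp (t : ι) {X Y : Type} (f : {u : ι // u ≠ t} → X) (v : X) (g : X → Y) :
    (fun u => g (ins t f v u)) = ins t (fun u => g (f u)) (g v) := by
  funext u
  unfold ins
  by_cases h : u = t <;> simp [h]

lemma wv_offdiag {p q : Fin d} (h : p ≠ q) (z : Fin d × Fin d) :
    wv d (p, q) z = if (p, q) = z then 1 else 0 := by
  unfold wv
  simp [h]

lemma cond_reduce (hd : 2 ≤ d) (t : ι)
    (α β : (ι → Fin d) → ((ι → Fin d) → ℂ))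
    (hcond : ∀ c, CondSum d α β c = 0)
    (r : Fin d) (p q : Fin d) (hpq : p ≠ q)
    (c' : {u : ι // u ≠ t} → Option (Fin d × (Fin d × Fin d))) :
    CondSum d (fun i' P' => α (ins t i' r) (ins t P' p))
      (fun i' P' => β (ins t i' r) (ins t P' q)) c' = 0 := by
  have h := hcond (ins t c' (some (r, (p, q))))
  unfold CondSum at h ⊢
  rw [← Equiv.sum_comp (splitEq t (V d)).symm] at h
  rw [Fintype.sum_prod_type] at h
  have hterm : ∀ (y : V d) (s' : {u : ι // u ≠ t} → V d),
      (∏ u, theta d (ins t c' (some (r, (p, q))) u) ((splitEq t (V d)).symm (y, s') u)) *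
        (α (fun u => (((splitEq t (V d)).symm (y, s')) u).1)
            (fun u => (((splitEq t (V d)).symm (y, s')) u).2.1) *
          β (fun u => (((splitEq t (V d)).symm (y, s')) u).1)
            (fun u => (((splitEq t (V d)).symm (y, s')) u).2.2))
      = (if (r, (p, q)) = y then 1 else 0) *
        ((∏ u : {u : ι // u ≠ t}, theta d (c' u) (s' u)) *
          (α (ins t (fun u => (s' u).1) y.1) (ins t (fun u => (s' u).2.1) y.2.1) *
            β (ins t (fun u => (s' u).1) y.1) (ins t (fun u => (s' u).2.2) y.2.2))) := by
    intro y s'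
    have hsymm : (splitEq t (V d)).symm (y, s') = ins t s' y := rfl
    rw [hsymm]
    rw [prod_split t]
    rw [ins_self t c' (some (r, (p, q))), ins_self t s' y]
    have e1 : ∀ u : {u : ι // u ≠ t},
        theta d (ins t c' (some (r, (p, q))) u.val) (ins t s' y u.val) = theta d (c' u) (s' u) := by
      intro u
      rw [ins_ne, ins_ne]
    rw [Finset.prod_congr rfl (fun u _ => e1 u)]
    have e3 : theta d (some (r, (p, q))) y = if (r, (p, q)) = y then 1 else 0 := by
      simp only [theta]
      rw [wv_offdiag hpq]
      obtain ⟨y1, y2⟩ := y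
      by_cases h1 : r = y1 <;> by_cases h2 : (p, q) = y2 <;>
        simp [h1, h2, Prod.ext_iff]
    rw [e3]
    have e4 : (fun u => (ins t s' y u).1) = ins t (fun u => (s' u).1) y.1 :=
      ins_comp t s' y Prod.fst
    have e5 : (fun u => (ins t s' y u).2.1) = ins t (fun u => (s' u).2.1) y.2.1 :=
      ins_comp t s' y (fun z => z.2.1)
    have e6 : (fun u => (ins t s' y u).2.2) = ins t (fun u => (s' u).2.2) y.2.2 :=
      ins_comp t s' y (fun z => z.2.2)
    rw [e4, e5, e6]
    ring
  rw [Finset.sum_congr rfl (fun y _ => Finset.sum_congr rfl (fun s' _ => hterm y s'))] at h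
  simp only [ite_mul, one_mul, zero_mul] at h
  rw [Finset.sum_comm] at h
  simp only [Finset.sum_ite_eq, Finset.mem_univ, if_true] at h
  simpa using h

lemma crux_step (hd : 2 ≤ d)
    (α β : (ι → Fin d) → ((ι → Fin d) → ℂ))
    (IH : ∀ t : ι, ∀ α' β' : ({u : ι // u ≠ t} → Fin d) → (({u : ι // u ≠ t} → Fin d) → ℂ),
      (∀ c', CondSum d α' β' c' = 0) → ∀ i', α' i' = 0 ∨ β' i' = 0)
    (hcond : ∀ c, CondSum d α β c = 0) (i : ι → Fin d) :
    α i = 0 ∨ β i = 0 := by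
  by_contra hbad
  push_neg at hbad
  obtain ⟨hα, hβ⟩ := hbad
  obtain ⟨P₀, hP₀⟩ : ∃ P, α i P ≠ 0 := by
    by_contra h
    push_neg at h
    exact hα (funext h)
  obtain ⟨Q₀, hQ₀⟩ : ∃ Q, β i Q ≠ 0 := by
    by_contra h
    push_neg at h
    exact hβ (funext h)
  have stepA : ∀ t : ι, ∃ a : Fin d,
      (∀ P, P t ≠ a → α i P = 0) ∧ (∀ Q, Q t ≠ a → β i Q = 0) := by
    intro t
    have D : ∀ p q : Fin d, p ≠ q →
        (∀ P', α i (ins t P' p) = 0) ∨ (∀ Q', β i (ins t Q' q) = 0) := by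
      intro p q hpq
      have hred := fun c' => cond_reduce hd t α β hcond (i t) p q hpq c'
      have := IH t (fun i' P' => α (ins t i' (i t)) (ins t P' p))
        (fun i' P' => β (ins t i' (i t)) (ins t P' q)) hred (fun u => i u.val)
      rcases this with h | h
      · left
        intro P'
        have h2 := congrFun h P'
        rwa [ins_restrict t i] at h2
      · right
        intro Q'
        have h2 := congrFun h Q'
        rwa [ins_restrict t i] at h2
    have hab : P₀ t = Q₀ t := by
      by_contra hne
      rcases D (P₀ t) (Q₀ t) hne with h | h
      · have := h (fun u => P₀ u.val)
        rw [ins_restrict t P₀] at this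
        exact hP₀ this
      · have := h (fun u => Q₀ u.val)
        rw [ins_restrict t Q₀] at this
        exact hQ₀ this
    refine ⟨P₀ t, ?_, ?_⟩
    · intro P hPt
      have hne : P t ≠ Q₀ t := by rw [← hab]; exact hPt
      rcases D (P t) (Q₀ t) hne with h | h
      · have := h (fun u => P u.val)
        rwa [ins_restrict t P] at this
      · exfalso
        have := h (fun u => Q₀ u.val)
        rw [ins_restrict t Q₀] at this
        exact hQ₀ this
    · intro Q hQt
      have hne : P₀ t ≠ Q t := fun hEq => hQt (by rw [← hEq, hab])
      rcases D (P₀ t) (Q t) hne with h | h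
      · exfalso
        have := h (fun u => P₀ u.val)
        rw [ins_restrict t P₀] at this
        exact hP₀ this
      · have := h (fun u => Q u.val)
        rwa [ins_restrict t Q] at this
  choose Pstar hPstar using stepA
  have hPstar_α : ∀ P, α i P ≠ 0 → P = Pstar := by
    intro P hP
    funext t
    by_contra hne
    exact hP ((hPstar t).1 P hne)
  have hPstar_β : ∀ Q, β i Q ≠ 0 → Q = Pstar := by
    intro Q hQ
    funext t
    by_contra hne
    exact hQ ((hPstar t).2 Q hne)
  have hPα : α i Pstar ≠ 0 := by
    have e := hPstar_α P₀ hP₀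
    rwa [e] at hP₀
  have hPβ : β i Pstar ≠ 0 := by
    have e := hPstar_β Q₀ hQ₀
    rwa [e] at hQ₀
  -- Step C
  have h := hcond (fun t => some (i t, (Pstar t, Pstar t)))
  unfold CondSum at h
  set s₀ : ι → V d := fun t => (i t, (Pstar t, Pstar t)) with hs₀
  have hs₀1 : (fun t => (s₀ t).1) = i := rfl
  have hs₀2 : (fun t => (s₀ t).2.1) = Pstar := rfl
  have hs₀3 : (fun t => (s₀ t).2.2) = Pstar := rfl
  have hcollapse := Finset.sum_eq_single (M := ℂ) s₀
    (f := fun s => (∏ t, theta d (some (i t, (Pstar t, Pstar t))) (s t)) *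
      (α (fun t => (s t).1) (fun t => (s t).2.1) * β (fun t => (s t).1) (fun t => (s t).2.2)))
    (by
      intro s _ hs
      show _ = _
      by_cases h1 : (fun t => (s t).1) = i
      · by_cases h2 : (fun t => (s t).2.1) = Pstar
        · by_cases h3 : (fun t => (s t).2.2) = Pstar
          · exfalso
            apply hs
            funext t
            exact Prod.ext (congrFun h1 t) (Prod.ext (congrFun h2 t) (congrFun h3 t))
          · have hz : β (fun t => (s t).1) (fun t => (s t).2.2) = 0 := by
              rw [h1]
              by_contra hne'
              exact h3 (hPstar_β _ hne')
            rw [hz]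
            ring
        · have hz : α (fun t => (s t).1) (fun t => (s t).2.1) = 0 := by
            rw [h1]
            by_contra hne'
            exact h2 (hPstar_α _ hne')
          rw [hz]
          ring
      · obtain ⟨t, ht⟩ := Function.ne_iff.mp h1
        apply mul_eq_zero_of_left
        apply Finset.prod_eq_zero (Finset.mem_univ t)
        simp only [theta]
        rw [if_neg (fun hh => ht hh.symm)]
        rw [zero_mul])
    (by intro hnot; exact absurd (Finset.mem_univ s₀) hnot)
  rw [hcollapse] at h
  have hprod : (∏ t : ι, theta d (some (i t, (Pstar t, Pstar t))) (s₀ t)) ≠ 0 := by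
    apply Finset.prod_ne_zero_iff.mpr
    intro t _
    have hwv : theta d (some (i t, (Pstar t, Pstar t))) (s₀ t) = 1 - (d:ℂ)⁻¹ := by
      simp [theta, wv, dg, hs₀]
    rw [hwv]
    intro hz
    have h1 : (1:ℂ) = (d:ℂ)⁻¹ := sub_eq_zero.mp hz
    have h2 : (d:ℂ) = 1 := inv_eq_one.mp h1.symm
    have h3 : d = 1 := Nat.cast_eq_one.mp h2
    omega
  exact absurd h (by
    apply mul_ne_zero hprod
    exact mul_ne_zero hPα hPβ)

theorem crux (hd : 2 ≤ d) : ∀ (m : ℕ) (ι : Type) (_inst1 : Fintype ι) (_inst2 : DecidableEq ι),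
    Fintype.card ι ≤ m →
    ∀ α β : (ι → Fin d) → ((ι → Fin d) → ℂ),
      (∀ c, CondSum d α β c = 0) → ∀ i, α i = 0 ∨ β i = 0 := by
  intro m
  induction m with
  | zero =>
    intro ι inst1 inst2 hcard α β hcond i
    haveI : IsEmpty ι := Fintype.card_eq_zero_iff.mp (Nat.le_zero.mp hcard)
    exact crux_step hd α β (fun t => isEmptyElim t) hcond i
  | succ m IHm =>
    intro ι inst1 inst2 hcard α β hcond i
    refine crux_step hd α β ?_ hcond i
    intro t α' β' hcond' i'
    refine IHm {u : ι // u ≠ t} _ _ ?_ α' β' hcond' i'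
    have hlt : Fintype.card {u : ι // u ≠ t} < Fintype.card ι :=
      Fintype.card_subtype_lt (x := t) (by simp)
    omega

end Crux

/-! ## Decomposition of the quadratic form -/

noncomputable def Lfun (d n : ℕ) (x : (Fin n → V d) → ℂ) (F : Fin n → K d) : ℂ :=
  ∑ s : Fin n → V d, (∏ t, psi d (F t) (s t)) * x s

lemma dg_conj (v : Fin d × Fin d) : (starRingEnd ℂ) (dg d v) = dg d v := by
  unfold dg; split_ifs <;> simp

lemma wv_conj (p' v : Fin d × Fin d) : (starRingEnd ℂ) (wv d p' v) = wv d p' v := by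
  unfold wv
  rw [map_sub]
  congr 1
  · split_ifs <;> simp
  · split_ifs with h1
    · rw [_root_.map_mul, dg_conj, map_inv₀, map_natCast]
    · simp

lemma uv_conj (r i : Fin d) : (starRingEnd ℂ) (uv d r i) = uv d r i := by
  unfold uv
  rw [map_sub, map_inv₀, map_natCast]
  congr 1
  split_ifs <;> simp

lemma psi_conj (k : K d) (v : V d) : (starRingEnd ℂ) (psi d k v) = psi d k v := by
  rcases k with rp | p' | u
  · simp only [psi, _root_.map_mul, uv_conj, wv_conj]
  · simp only [psi, wv_conj]
  · simp only [psi, dg_conj]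

lemma Qdecomp (hd : 2 ≤ d) (n : ℕ) (x : (Fin n → V d) → ℂ) :
    (∑ s : Fin n → V d, ∑ s' : Fin n → V d,
        (starRingEnd ℂ) (x s) * AmatPow d n s s' * x s')
      = ∑ F : Fin n → K d, ((∏ t, (wt d (F t) : ℂ)) * (starRingEnd ℂ) (Lfun d n x F))
          * Lfun d n x F := by
  have expand : ∀ s s' : Fin n → V d, AmatPow d n s s'
      = ∑ F : Fin n → K d, ∏ t, ((wt d (F t) : ℂ) * psi d (F t) (s t) * psi d (F t) (s' t)) := by
    intro s s'
    unfold AmatPow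
    rw [Finset.prod_congr rfl (fun t _ => key1 hd (s t) (s' t))]
    exact Fintype.prod_sum (fun t k => (wt d k : ℂ) * psi d k (s t) * psi d k (s' t))
  calc ∑ s : Fin n → V d, ∑ s' : Fin n → V d,
        (starRingEnd ℂ) (x s) * AmatPow d n s s' * x s'
      = ∑ s : Fin n → V d, ∑ s' : Fin n → V d, ∑ F : Fin n → K d,
          (starRingEnd ℂ) (x s) * (∏ t, ((wt d (F t) : ℂ) * psi d (F t) (s t) * psi d (F t) (s' t))) * x s' := by
        apply Finset.sum_congr rfl; intro s _
        apply Finset.sum_congr rfl; intro s' _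
        rw [expand s s', Finset.mul_sum, Finset.sum_mul]
    _ = ∑ F : Fin n → K d, ∑ s : Fin n → V d, ∑ s' : Fin n → V d,
          (starRingEnd ℂ) (x s) * (∏ t, ((wt d (F t) : ℂ) * psi d (F t) (s t) * psi d (F t) (s' t))) * x s' := by
        rw [Finset.sum_congr rfl (fun s _ => Finset.sum_comm)]
        rw [Finset.sum_comm]
    _ = ∑ F : Fin n → K d, ((∏ t, (wt d (F t) : ℂ)) * (starRingEnd ℂ) (Lfun d n x F)) * Lfun d n x F := by
        apply Finset.sum_congr rfl; intro F _
        have hT : ∀ s s' : Fin n → V d,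
            (starRingEnd ℂ) (x s) * (∏ t, ((wt d (F t) : ℂ) * psi d (F t) (s t) * psi d (F t) (s' t))) * x s'
            = ((∏ t, (wt d (F t) : ℂ)) * ((starRingEnd ℂ) (x s) * ∏ t, psi d (F t) (s t)))
              * ((∏ t, psi d (F t) (s' t)) * x s') := by
          intro s s'
          rw [Finset.prod_mul_distrib, Finset.prod_mul_distrib]
          ring
        rw [Finset.sum_congr rfl (fun s _ => Finset.sum_congr rfl (fun s' _ => hT s s'))]
        have hconjL : ∑ s : Fin n → V d, ((starRingEnd ℂ) (x s) * ∏ t, psi d (F t) (s t))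
            = (starRingEnd ℂ) (Lfun d n x F) := by
          unfold Lfun
          rw [map_sum]
          apply Finset.sum_congr rfl; intro s _
          rw [_root_.map_mul, map_prod]
          rw [Finset.prod_congr rfl (fun t _ => psi_conj (F t) (s t))]
          ring
        calc ∑ s : Fin n → V d, ∑ s' : Fin n → V d,
              ((∏ t, (wt d (F t) : ℂ)) * ((starRingEnd ℂ) (x s) * ∏ t, psi d (F t) (s t)))
                * ((∏ t, psi d (F t) (s' t)) * x s')
            = (∑ s : Fin n → V d, (∏ t, (wt d (F t) : ℂ)) * ((starRingEnd ℂ) (x s) * ∏ t, psi d (F t) (s t)))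
              * (∑ s' : Fin n → V d, (∏ t, psi d (F t) (s' t)) * x s') := by
              rw [Finset.sum_mul_sum]
          _ = ((∏ t, (wt d (F t) : ℂ)) * (starRingEnd ℂ) (Lfun d n x F)) * Lfun d n x F := by
              rw [← Finset.mul_sum, hconjL]
              rfl

lemma forward_L (hd : 2 ≤ d) (n : ℕ) (x : (Fin n → V d) → ℂ)
    (hQ : (∑ s : Fin n → V d, ∑ s' : Fin n → V d,
        (starRingEnd ℂ) (x s) * AmatPow d n s s' * x s') = 0) :
    ∀ F : Fin n → K d, Lfun d n x F = 0 := by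
  have hdec := Qdecomp hd n x
  rw [hQ] at hdec
  have hre : ∑ F : Fin n → K d, (∏ t, wt d (F t)) * Complex.normSq (Lfun d n x F) = 0 := by
    have : ∀ F : Fin n → K d,
        ((∏ t, (wt d (F t) : ℂ)) * (starRingEnd ℂ) (Lfun d n x F)) * Lfun d n x F
        = (((∏ t, wt d (F t)) * Complex.normSq (Lfun d n x F) : ℝ) : ℂ) := by
      intro F
      rw [mul_assoc, ← Complex.normSq_eq_conj_mul_self]
      push_cast
      ring
    rw [Finset.sum_congr rfl (fun F _ => this F)] at hdec
    rw [← Complex.ofReal_sum] at hdec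
    exact_mod_cast hdec.symm
  intro F
  have hnn : ∀ F ∈ Finset.univ (α := Fin n → K d),
      0 ≤ (∏ t, wt d (F t)) * Complex.normSq (Lfun d n x F) := by
    intro F _
    apply mul_nonneg
    · exact le_of_lt (Finset.prod_pos (fun t _ => wt_pos hd (F t)))
    · exact Complex.normSq_nonneg _
  have hzero := (Finset.sum_eq_zero_iff_of_nonneg hnn).mp hre F (Finset.mem_univ F)
  have hw : 0 < ∏ t, wt d (F t) := Finset.prod_pos (fun t _ => wt_pos hd (F t))
  have : Complex.normSq (Lfun d n x F) = 0 := by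
    by_contra hne
    have := lt_of_le_of_ne (Complex.normSq_nonneg _) (Ne.symm hne)
    nlinarith
  exact Complex.normSq_eq_zero.mp this

lemma cond_from_L (hd : 2 ≤ d) (n : ℕ) (x : (Fin n → V d) → ℂ)
    (hL : ∀ F : Fin n → K d, Lfun d n x F = 0)
    (c : Fin n → Option (Fin d × (Fin d × Fin d))) :
    ∑ s : Fin n → V d, (∏ t, theta d (c t) (s t)) * x s = 0 := by
  classical
  set Ff : Fin n → V d → ℂ := fun t => match c t with
    | none => psi d (Sum.inr (Sum.inr ()))
    | some rp => psi d (Sum.inl rp) with hFf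
  set Gf : Fin n → V d → ℂ := fun t => match c t with
    | none => 0
    | some rp => fun v => (d:ℂ)⁻¹ * psi d (Sum.inr (Sum.inl rp.2)) v with hGf
  have hsplit : ∀ t v, theta d (c t) v = Ff t v + Gf t v := by
    intro t v
    rw [hFf, hGf]
    rcases hc : c t with _ | ⟨r, p'⟩
    · simp only [theta, psi, hc]
      simp
    · simp only [theta, psi, uv, hc]
      ring
  have hexp : ∀ s : Fin n → V d, (∏ t, theta d (c t) (s t))
      = ∑ T : Finset (Fin n), (∏ t ∈ T, Ff t (s t)) * ∏ t ∈ Tᶜ, Gf t (s t) := by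
    intro s
    rw [Finset.prod_congr rfl (fun t _ => hsplit t (s t))]
    exact Fintype.prod_add (fun t => Ff t (s t)) (fun t => Gf t (s t))
  rw [Finset.sum_congr rfl (fun s _ => by rw [hexp s, Finset.sum_mul])]
  rw [Finset.sum_comm]
  apply Finset.sum_eq_zero
  intro T _
  by_cases hnone : ∃ t, t ∉ T ∧ c t = none
  · obtain ⟨t0, ht0, hct0⟩ := hnone
    apply Finset.sum_eq_zero
    intro s _
    have hg : Gf t0 (s t0) = 0 := by
      rw [hGf]
      simp only [hct0]
      rfl
    rw [Finset.prod_eq_zero (Finset.mem_compl.mpr ht0) hg]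
    ring
  · push_neg at hnone
    have hsome : ∀ t, t ∉ T → ∃ rp, c t = some rp := by
      intro t ht
      rcases hc : c t with _ | rp
      · exact absurd hc (hnone t ht)
      · exact ⟨rp, rfl⟩
    set F : Fin n → K d := fun t =>
      if t ∈ T then (match c t with
        | none => Sum.inr (Sum.inr ())
        | some rp => Sum.inl rp)
      else (match c t with
        | none => Sum.inr (Sum.inr ())
        | some rp => Sum.inr (Sum.inl rp.2)) with hF
    have hterm : ∀ s : Fin n → V d,
        (∏ t ∈ T, Ff t (s t)) * ∏ t ∈ Tᶜ, Gf t (s t)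
        = (∏ t ∈ Tᶜ, (d:ℂ)⁻¹) * ∏ t, psi d (F t) (s t) := by
      intro s
      have e1 : ∏ t ∈ T, Ff t (s t) = ∏ t ∈ T, psi d (F t) (s t) := by
        apply Finset.prod_congr rfl
        intro t ht
        rw [hFf, hF]
        simp only [ht, if_true]
        rcases hc : c t with _ | rp <;> simp only [hc]
      have e2 : ∏ t ∈ Tᶜ, Gf t (s t) = ∏ t ∈ Tᶜ, ((d:ℂ)⁻¹ * psi d (F t) (s t)) := by
        apply Finset.prod_congr rfl
        intro t ht
        obtain ⟨rp, hrp⟩ := hsome t (Finset.mem_compl.mp ht)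
        rw [hGf, hF]
        simp [hrp, Finset.mem_compl.mp ht]
      rw [e1, e2, Finset.prod_mul_distrib]
      rw [mul_comm (∏ t ∈ T, psi d (F t) (s t)) _, mul_assoc]
      congr 1
      rw [mul_comm]
      exact Finset.prod_mul_prod_compl T _
    rw [Finset.sum_congr rfl (fun s _ => by rw [hterm s])]
    rw [Finset.sum_congr rfl (fun s _ => mul_assoc _ _ _), ← Finset.mul_sum]
    have := hL F
    unfold Lfun at this
    rw [this]
    ring

end Stmt0

/-- Matrix-theoretic core of Theorem 1: ⟨x, A_n x⟩ = 0 iff for every basis string i,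
at most one of α_i, β_i is nonzero. -/
theorem stmt_0 (d n : ℕ) (hd : 2 ≤ d) (hn : 1 ≤ n)
    (α β : (Fin n → Fin d) → ((Fin n → Fin d) → ℂ))
    (x : (Fin n → Fin d × (Fin d × Fin d)) → ℂ)
    (hx : ∀ s : Fin n → Fin d × (Fin d × Fin d),
      x s = α (fun t => (s t).1) (fun t => (s t).2.1) * β (fun t => (s t).1) (fun t => (s t).2.2)) :
    (∑ s : Fin n → Fin d × (Fin d × Fin d), ∑ s' : Fin n → Fin d × (Fin d × Fin d),
        (starRingEnd ℂ) (x s) * AmatPow d n s s' * x s') = 0 ↔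
      ∀ i : Fin n → Fin d, α i = 0 ∨ β i = 0 := by
  constructor
  · intro hQ
    have hL := Stmt0.forward_L hd n x hQ
    have hcond : ∀ c, Stmt0.CondSum d α β c = 0 := by
      intro c
      have hc := Stmt0.cond_from_L hd n x hL c
      unfold Stmt0.CondSum
      rw [Finset.sum_congr rfl (fun s _ => by rw [← hx s])]
      exact hc
    exact Stmt0.crux hd n (Fin n) _ _ (by simp) α β hcond
  · intro hall
    apply Finset.sum_eq_zero
    intro s _
    apply Finset.sum_eq_zero
    intro s' _
    rcases hall (fun t => (s' t).1) with h | h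
    · rw [hx s', h]
      simp
    · rw [hx s', h]
      simp
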